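/- Let X be a Banach space, Ω a nonempty closed subset of X, and γ ∈ (0, 1). Then for every x ∉ Ω there exists z ∈ Ω such that γ‖x − z‖ < min{ d(x, Ω), d(x − z, T^B(Ω, z)) }. -/

import Mathlib

open Filter Metric Set Pointwise Topology
open scoped ENNReal

noncomputable section

/-- The Bouligand (contingent) tangent cone of `A` at `u`. -/
def bouligand {X : Type*} [NormedAddCommGroup X] [NormedSpace ℝ X] (A : Set X) (u : X) :
    Set X :=
  {v | ∃ (vs : ℕ → X) (ts : ℕ → ℝ),
    Tendsto vs atTop (𝓝 v) ∧ Tendsto ts atTop (𝓝 0) ∧ (∀ n, 0 < ts n) ∧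
    ∀ n, u + ts n • vs n ∈ A}

/-- The Shapiro first order contact property of `A` at `a`. -/
def shapiro {X : Type*} [NormedAddCommGroup X] [NormedSpace ℝ X] (A : Set X) (a : X) : Prop :=
  ∀ ε > 0, ∃ δ > 0, ∀ x ∈ A ∩ ball a δ, ∀ u ∈ A ∩ ball a δ,
    infDist (x - u) (bouligand A u) ≤ ε * ‖x - u‖

/-- The lower Hadamard directional derivative of `φ` at `x` in direction `h`. -/
def hadamardDeriv {X : Type*} [NormedAddCommGroup X] [NormedSpace ℝ X]
    (φ : X → EReal) (x h : X) : EReal :=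
  liminf (fun p : ℝ × X => (((1 : ℝ) / p.1 : ℝ) : EReal) * (φ (x + p.1 • p.2) - φ x))
    ((𝓝[>] (0 : ℝ)) ×ˢ 𝓝 h)

/-- The epigraph of an `EReal`-valued function, as a subset of `X × ℝ`. -/
def epigraph {X : Type*} (φ : X → EReal) : Set (X × ℝ) := {p | φ p.1 ≤ (p.2 : EReal)}

/-- The Hausdorff-Pompeiu excess of `C` beyond `D`. -/
def excess {X : Type*} [PseudoEMetricSpace X] (C D : Set X) : ℝ≥0∞ :=
  ⨆ c ∈ C, EMetric.infEdist c D

/-- Metric regularity of `φ` around `xbar` (for `φ xbar`). -/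
def metReg {X Y : Type*} [NormedAddCommGroup X] [NormedAddCommGroup Y]
    (φ : X → Y) (xbar : X) : Prop :=
  ∃ κ > (0 : ℝ), ∃ U ∈ 𝓝 xbar, ∃ V ∈ 𝓝 (φ xbar), ∀ x ∈ U, ∀ y ∈ V,
    EMetric.infEdist x (φ ⁻¹' {y}) ≤ ENNReal.ofReal (κ * ‖φ x - y‖)
theorem ekeland_norm {X : Type*} [NormedAddCommGroup X]
    [CompleteSpace X] (Ω : Set X) (hcl : IsClosed Ω) (x u₀ : X) (hu₀ : u₀ ∈ Ω)
    (σ : ℝ) (hσ : 0 < σ) :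
    ∃ z ∈ Ω, ‖x - z‖ + σ * ‖z - u₀‖ ≤ ‖x - u₀‖ ∧
      ∀ u ∈ Ω, ‖x - z‖ ≤ ‖x - u‖ + σ * ‖u - z‖ := by
  set g : X → ℝ := fun u => ‖x - u‖ with hg
  set S : X → Set X := fun z => {u ∈ Ω | g u + σ * ‖u - z‖ ≤ g z} with hS
  have hself : ∀ z ∈ Ω, z ∈ S z := by
    intro z hz; refine ⟨hz, ?_⟩; simp
  have htrans : ∀ z u w, u ∈ S z → w ∈ S u → w ∈ S z := by
    rintro z u w ⟨huΩ, hu⟩ ⟨hwΩ, hw⟩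
    refine ⟨hwΩ, ?_⟩
    have := norm_sub_le_norm_sub_add_norm_sub w u z
    have h2 : σ * ‖w - z‖ ≤ σ * (‖w - u‖ + ‖u - z‖) := by
      apply mul_le_mul_of_nonneg_left _ hσ.le
      exact norm_sub_le_norm_sub_add_norm_sub w u z
    nlinarith
  have hstep : ∀ (n : ℕ) (z : X), ∃ u : X,
      z ∈ Ω → u ∈ S z ∧ ∀ w ∈ S z, g u ≤ g w + (1/2 : ℝ)^n := by
    intro n z
    by_cases hz : z ∈ Ω
    · have hne' : (g '' S z).Nonempty := ⟨g z, z, hself z hz, rfl⟩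
      have hbdd : BddBelow (g '' S z) := ⟨0, by rintro _ ⟨u, -, rfl⟩; positivity⟩
      have hlt : sInf (g '' S z) < sInf (g '' S z) + (1/2 : ℝ)^n := by
        have : (0:ℝ) < (1/2:ℝ)^n := by positivity
        linarith
      obtain ⟨a, ⟨u, huS, rfl⟩, ha⟩ := exists_lt_of_csInf_lt hne' hlt
      refine ⟨u, fun _ => ⟨huS, fun w hw => ?_⟩⟩
      have : sInf (g '' S z) ≤ g w := csInf_le hbdd ⟨w, hw, rfl⟩
      linarith
    · exact ⟨z, fun h => absurd h hz⟩
  choose F hF using hstep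
  set zs : ℕ → X := fun n => Nat.rec u₀ (fun k z => F k z) n with hzs
  have hzs0 : zs 0 = u₀ := rfl
  have hzsS : ∀ n, zs (n+1) = F n (zs n) := fun n => rfl
  have hmem : ∀ n, zs n ∈ Ω := by
    intro n; induction n with
    | zero => exact hu₀
    | succ k ih => exact ((hF k (zs k) ih).1).1
  have hS1 : ∀ n, zs (n+1) ∈ S (zs n) := fun n => (hF n (zs n) (hmem n)).1
  have hS2 : ∀ n, ∀ w ∈ S (zs n), g (zs (n+1)) ≤ g w + (1/2:ℝ)^n :=
    fun n => (hF n (zs n) (hmem n)).2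
  have hchain : ∀ n m, n ≤ m → zs m ∈ S (zs n) := by
    intro n m hnm
    induction m, hnm using Nat.le_induction with
    | base => exact hself _ (hmem n)
    | succ m hnm ih => exact htrans _ _ _ ih (hS1 m)
  have hkey : ∀ n, ∀ w ∈ S (zs (n+1)), σ * ‖w - zs (n+1)‖ ≤ (1/2:ℝ)^n := by
    intro n w hw
    have h1 : g w + σ * ‖w - zs (n+1)‖ ≤ g (zs (n+1)) := hw.2
    have h2 : g (zs (n+1)) ≤ g w + (1/2:ℝ)^n :=
      hS2 n w (htrans _ _ _ (hS1 n) hw)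
    linarith
  have hcauchy : CauchySeq zs := by
    rw [Metric.cauchySeq_iff']
    intro ε hε
    obtain ⟨N, hN⟩ := (tendsto_pow_atTop_nhds_zero_of_lt_one (by norm_num : (0:ℝ) ≤ 1/2)
      (by norm_num : (1/2:ℝ) < 1)).eventually (gt_mem_nhds (by positivity : (0:ℝ) < σ * ε))
      |>.exists_forall_of_atTop
    refine ⟨N + 1, fun n hn => ?_⟩
    have h1 : σ * ‖zs n - zs (N+1)‖ ≤ (1/2:ℝ)^N := hkey N (zs n) (hchain _ _ hn)
    have h2 : (1/2:ℝ)^N < σ * ε := hN N le_rfl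
    rw [dist_eq_norm]
    nlinarith [norm_nonneg (zs n - zs (N+1))]
  obtain ⟨z, hz⟩ := cauchySeq_tendsto_of_complete hcauchy
  have hzΩ : z ∈ Ω := hcl.mem_of_tendsto hz (Eventually.of_forall hmem)
  have hSclosed : ∀ n, IsClosed (S (zs n)) := by
    intro n
    have : S (zs n) = Ω ∩ {u | g u + σ * ‖u - zs n‖ ≤ g (zs n)} := rfl
    rw [this]
    exact hcl.inter (isClosed_le (by fun_prop) continuous_const)
  have hzS : ∀ n, z ∈ S (zs n) := by
    intro n
    refine (hSclosed n).mem_of_tendsto hz ?_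
    filter_upwards [eventually_ge_atTop n] with m hm
    exact hchain n m hm
  refine ⟨z, hzΩ, ?_, ?_⟩
  · have := (hzS 0).2; rw [hzs0] at this; exact this
  · intro u huΩ
    by_contra hcon
    push_neg at hcon
    have huS : u ∈ S z := ⟨huΩ, hcon.le⟩
    have huSn : ∀ n, u ∈ S (zs n) := fun n => htrans _ _ _ (hzS n) huS
    have hu_lim : Tendsto (fun n => zs (n+1)) atTop (𝓝 u) := by
      rw [tendsto_iff_dist_tendsto_zero]
      have htend : Tendsto (fun n : ℕ => (1/2:ℝ)^n / σ) atTop (𝓝 0) := by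
        simpa using (tendsto_pow_atTop_nhds_zero_of_lt_one (by norm_num : (0:ℝ) ≤ 1/2)
          (by norm_num : (1/2:ℝ) < 1)).div_const σ
      refine squeeze_zero (fun n => dist_nonneg) (fun n => ?_) htend
      have := hkey n u (huSn (n+1))
      rw [dist_comm, dist_eq_norm]
      rw [le_div_iff₀ hσ, mul_comm]
      exact this
    have hz_lim : Tendsto (fun n => zs (n+1)) atTop (𝓝 z) :=
      hz.comp (tendsto_add_atTop_nat 1)
    have : u = z := tendsto_nhds_unique hu_lim hz_lim
    rw [this] at hcon
    simp at hcon

theorem exists_point_tangent_dist {X : Type*} [NormedAddCommGroup X] [NormedSpace ℝ X]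
    [CompleteSpace X] (Ω : Set X) (hne : Ω.Nonempty) (hcl : IsClosed Ω)
    (γ : ℝ) (hγ : γ ∈ Set.Ioo (0 : ℝ) 1) (x : X) (hx : x ∉ Ω) :
    ∃ z ∈ Ω, γ * ‖x - z‖ < min (infDist x Ω) (infDist (x - z) (bouligand Ω z)) := by
  obtain ⟨hγ0, hγ1⟩ := hγ
  set d := infDist x Ω with hd
  have hd0 : 0 < d := (hcl.notMem_iff_infDist_pos hne).1 hx
  set σ : ℝ := (1 - γ) / 2 with hσdef
  have hσ0 : 0 < σ := by simp only [hσdef]; linarith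
  have hσ1 : σ < 1 := by simp only [hσdef]; linarith
  set ε : ℝ := d * (1 - γ) / (2 * γ) with hεdef
  have hε0 : 0 < ε := by
    apply div_pos (by nlinarith) (by linarith)
  obtain ⟨u₀, hu₀, hu₀d⟩ := (infDist_lt_iff hne).1 (by linarith : d < d + ε)
  obtain ⟨z, hzΩ, hz1, hz2⟩ := ekeland_norm Ω hcl x u₀ hu₀ σ hσ0
  have hxz : ‖x - z‖ < d + ε := by
    rw [dist_eq_norm] at hu₀d
    nlinarith [norm_nonneg (z - u₀)]
  have hw0 : 0 < ‖x - z‖ := by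
    rw [norm_pos_iff, sub_ne_zero]
    rintro rfl; exact hx hzΩ
  refine ⟨z, hzΩ, lt_min ?_ ?_⟩
  · -- γ‖x-z‖ < d
    have : γ * ‖x - z‖ < γ * (d + ε) := by
      exact mul_lt_mul_of_pos_left hxz hγ0
    have h2 : γ * (d + ε) = γ * d + d * (1 - γ) / 2 := by
      rw [hεdef]; field_simp
    nlinarith
  · -- γ‖x-z‖ < infDist (x-z) T
    set w := x - z with hwdef
    set T := bouligand Ω z with hT
    have hTne : T.Nonempty := by
      refine ⟨0, fun _ => 0, fun n => 1 / (n + 1), tendsto_const_nhds,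
        tendsto_one_div_add_atTop_nhds_zero_nat, fun n => by positivity, fun n => by
          simpa using hzΩ⟩
    have hbound : ∀ v ∈ T, (1 - σ) / (1 + σ) * ‖w‖ ≤ dist w v := by
      rintro v ⟨vs, ts, hvs, hts, htpos, hmem⟩
      have hstep : ‖w‖ ≤ ‖w - v‖ + σ * ‖v‖ := by
        have hev : ∀ᶠ n in atTop, ‖w‖ ≤ ‖w - vs n‖ + σ * ‖vs n‖ := by
          filter_upwards [hts.eventually (eventually_le_nhds (by norm_num : (0:ℝ) < 1))]
            with n htn1
          have htn0 : 0 < ts n := htpos n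
          have hu : ‖x - z‖ ≤ ‖x - (z + ts n • vs n)‖ + σ * ‖(z + ts n • vs n) - z‖ :=
            hz2 _ (hmem n)
          have he1 : x - (z + ts n • vs n) = w - ts n • vs n := by
            simp only [hwdef]; abel
          have he2 : (z + ts n • vs n) - z = ts n • vs n := by abel
          rw [he1, he2, norm_smul, Real.norm_eq_abs, abs_of_pos htn0] at hu
          have hconv : ‖w - ts n • vs n‖ ≤ (1 - ts n) * ‖w‖ + ts n * ‖w - vs n‖ := by
            have : w - ts n • vs n = (1 - ts n) • w + ts n • (w - vs n) := by
              module
            rw [this]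
            calc ‖(1 - ts n) • w + ts n • (w - vs n)‖
                ≤ ‖(1 - ts n) • w‖ + ‖ts n • (w - vs n)‖ := norm_add_le _ _
              _ = (1 - ts n) * ‖w‖ + ts n * ‖w - vs n‖ := by
                  rw [norm_smul, norm_smul, Real.norm_eq_abs, Real.norm_eq_abs,
                    abs_of_nonneg (by linarith), abs_of_pos htn0]
          have hkey : ts n * ‖w‖ ≤ ts n * (‖w - vs n‖ + σ * ‖vs n‖) := by nlinarith
          exact le_of_mul_le_mul_left (by linarith [hkey]) htn0
        have htend : Tendsto (fun n => ‖w - vs n‖ + σ * ‖vs n‖) atTop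
            (𝓝 (‖w - v‖ + σ * ‖v‖)) :=
          ((tendsto_const_nhds.sub hvs).norm).add ((hvs.norm).const_mul σ)
        exact ge_of_tendsto htend hev
      have hstep2 : ‖v‖ - ‖w‖ ≤ ‖w - v‖ := by
        have := norm_sub_norm_le v w
        rw [← norm_sub_rev w v] at this
        linarith
      rw [dist_eq_norm]
      rw [div_mul_eq_mul_div, div_le_iff₀ (by linarith : (0:ℝ) < 1 + σ)]
      nlinarith [norm_nonneg (w - v), norm_nonneg v]
    have hinf : (1 - σ) / (1 + σ) * ‖w‖ ≤ infDist w T := by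
      by_contra h
      push_neg at h
      obtain ⟨y, hy, hlty⟩ := (infDist_lt_iff hTne).1 h
      exact absurd (hbound y hy) (not_le.2 hlty)
    have hlt : γ * ‖w‖ < (1 - σ) / (1 + σ) * ‖w‖ := by
      apply mul_lt_mul_of_pos_right _ hw0
      rw [lt_div_iff₀ (by linarith : (0:ℝ) < 1 + σ)]
      simp only [hσdef]
      nlinarith [sq_nonneg (1 - γ)]
    linarith
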